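/- In ZF with Turing determinacy, if f : 𝒟 → ℝ satisfies f(y) ≠ f(y') on no upper cone (i.e., f(y) = f(y') holds on some upper cone, where y' is the Turing jump), and moreover f(y) is Turing below y on an upper cone, then on some upper cone f(y) is strictly Turing below y: the degree of f(y) is < y. -/

import Mathlib

/-- Relativized partial recursiveness: `f` is partial recursive in the oracle `O`. -/
inductive RelRecursiveIn (O : ℕ →. ℕ) : (ℕ →. ℕ) → Prop
  | oracle : RelRecursiveIn O O
  | zero : RelRecursiveIn O (pure 0)
  | succ : RelRecursiveIn O Nat.succ
  | left : RelRecursiveIn O ↑fun n : ℕ => n.unpair.1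
  | right : RelRecursiveIn O ↑fun n : ℕ => n.unpair.2
  | pair {f g} : RelRecursiveIn O f → RelRecursiveIn O g →
      RelRecursiveIn O fun n => Nat.pair <$> f n <*> g n
  | comp {f g} : RelRecursiveIn O f → RelRecursiveIn O g →
      RelRecursiveIn O fun n => g n >>= f
  | prec {f g} : RelRecursiveIn O f → RelRecursiveIn O g →
      RelRecursiveIn O (Nat.unpaired fun a n =>
        n.rec (f a) fun y IH => do let i ← IH; g (Nat.pair a (Nat.pair y i)))
  | rfind {f} : RelRecursiveIn O f →
      RelRecursiveIn O fun a => Nat.rfind fun n => (fun m => m = 0) <$> f (Nat.pair a n)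

theorem RelRecursiveIn.trans' {O O' f : ℕ →. ℕ}
    (hf : RelRecursiveIn O f) (hO : RelRecursiveIn O' O) : RelRecursiveIn O' f := by
  induction hf with
  | oracle => exact hO
  | zero => exact .zero
  | succ => exact .succ
  | left => exact .left
  | right => exact .right
  | pair _ _ ih₁ ih₂ => exact .pair ih₁ ih₂
  | comp _ _ ih₁ ih₂ => exact .comp ih₁ ih₂
  | prec _ _ ih₁ ih₂ => exact .prec ih₁ ih₂
  | rfind _ ih => exact .rfind ih

/-- Reals are identified with elements of Cantor space `2^ω`. -/
abbrev TReal : Type := ℕ → Bool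

/-- The characteristic (total) function of a real, as a partial function on `ℕ`. -/
def charFn (x : TReal) : ℕ →. ℕ := fun n => Part.some (cond (x n) 1 0)

/-- Turing reducibility `x ≤ᵀ y` between reals. -/
def TuringLE (x y : TReal) : Prop := RelRecursiveIn (charFn y) (charFn x)

theorem TuringLE.refl (x : TReal) : TuringLE x x := RelRecursiveIn.oracle

theorem TuringLE.trans {x y z : TReal} (h₁ : TuringLE x y) (h₂ : TuringLE y z) :
    TuringLE x z := RelRecursiveIn.trans' h₁ h₂

/-- Turing equivalence of reals. -/
def TuringEquiv (x y : TReal) : Prop := TuringLE x y ∧ TuringLE y x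

instance turingSetoid : Setoid TReal :=
  ⟨TuringEquiv, fun x => ⟨TuringLE.refl x, TuringLE.refl x⟩, fun h => ⟨h.2, h.1⟩,
    fun h₁ h₂ => ⟨h₁.1.trans h₂.1, h₂.2.trans h₁.2⟩⟩

/-- The Turing degrees. -/
def TDegree : Type := Quotient turingSetoid

/-- The Turing degree of a real. -/
def deg (x : TReal) : TDegree := Quotient.mk _ x

instance : PartialOrder TDegree where
  le := Quotient.lift₂ TuringLE (by
    rintro a b a' b' ⟨hab, hba⟩ ⟨hcd, hdc⟩
    exact propext ⟨fun h => (hba.trans h).trans hcd, fun h => (hab.trans h).trans hdc⟩)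
  le_refl := fun d => Quotient.inductionOn d TuringLE.refl
  le_trans := fun a b c => Quotient.inductionOn₃ a b c fun _ _ _ h₁ h₂ => TuringLE.trans h₁ h₂
  le_antisymm := fun a b => Quotient.inductionOn₂ a b fun _ _ h₁ h₂ => Quotient.sound ⟨h₁, h₂⟩

/-- The upper cone of Turing degrees above `x`. -/
def upperCone (x : TDegree) : Set TDegree := {y | x ≤ y}

/-- Turing determinacy: every set of Turing degrees contains or is disjoint from
an upper cone. -/
def TD : Prop :=
  ∀ A : Set TDegree, (∃ x, upperCone x ⊆ A) ∨ (∃ x, upperCone x ⊆ Aᶜ)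

/-- The countable choice axiom for sets of reals. -/
def CCR : Prop :=
  ∀ A : ℕ → Set TReal, (∀ n, (A n).Nonempty) → ∃ f : ℕ → TReal, ∀ n, f n ∈ A n

/-- Codes for oracle machines. -/
inductive OCode : Type
  | zero
  | succ
  | left
  | right
  | oracle
  | pair : OCode → OCode → OCode
  | comp : OCode → OCode → OCode
  | prec : OCode → OCode → OCode
  | rfind' : OCode → OCode

/-- Evaluation of an oracle code relative to an oracle. -/
def OCode.eval (O : ℕ →. ℕ) : OCode → ℕ →. ℕ
  | .zero => pure 0
  | .succ => Nat.succ
  | .left => ↑fun n : ℕ => n.unpair.1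
  | .right => ↑fun n : ℕ => n.unpair.2
  | .oracle => O
  | .pair cf cg => fun n => Nat.pair <$> cf.eval O n <*> cg.eval O n
  | .comp cf cg => fun n => cg.eval O n >>= cf.eval O
  | .prec cf cg =>
      Nat.unpaired fun a n =>
        n.rec (cf.eval O a) fun y IH => do
          let i ← IH
          cg.eval O (Nat.pair a (Nat.pair y i))
  | .rfind' cf =>
      Nat.unpaired fun a m =>
        (Nat.rfind fun n => (fun x => x = 0) <$> cf.eval O (Nat.pair a (n + m))).map (· + m)

/-- A decoding of natural numbers as oracle codes. -/
def ofNatOCode : ℕ → OCode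
  | 0 => .zero
  | 1 => .succ
  | 2 => .left
  | 3 => .right
  | 4 => .oracle
  | n + 5 =>
    let m := n.div2.div2
    have hm : m < n + 5 := by
      simp only [m, Nat.div2_val]
      exact
        lt_of_le_of_lt (le_trans (Nat.div_le_self _ _) (Nat.div_le_self _ _))
          (Nat.lt_succ_of_le (by omega))
    have _m1 : m.unpair.1 < n + 5 := lt_of_le_of_lt m.unpair_left_le hm
    have _m2 : m.unpair.2 < n + 5 := lt_of_le_of_lt m.unpair_right_le hm
    match n.bodd, n.div2.bodd with
    | false, false => .pair (ofNatOCode m.unpair.1) (ofNatOCode m.unpair.2)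
    | false, true => .comp (ofNatOCode m.unpair.1) (ofNatOCode m.unpair.2)
    | true, false => .prec (ofNatOCode m.unpair.1) (ofNatOCode m.unpair.2)
    | true, true => .rfind' (ofNatOCode m)
decreasing_by
  all_goals first
    | exact _m1 | exact _m2 | exact hm
    | exact Nat.le_of_lt_succ _m1 | exact Nat.le_of_lt_succ _m2 | exact Nat.le_of_lt_succ hm

open Classical in
/-- The Turing jump of a real: its relativized halting problem. -/
noncomputable def jumpReal (x : TReal) : TReal :=
  fun e => decide (((ofNatOCode e).eval (charFn x) e).Dom)

/-- The Turing jump of a Turing degree. -/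
noncomputable def TDegree.jump (d : TDegree) : TDegree :=
  deg (jumpReal (Quotient.out d))

/-! ### Auxiliary development -/

theorem pfun_some_bind {α β : Type} (a : α) (f : α →. β) : Part.some a >>= f = f a :=
  Part.bind_some a f

theorem rfind_dom_pfun (p : ℕ →. Bool) :
    (Nat.rfind p).Dom ↔ ∃ n, true ∈ p n ∧ ∀ {m : ℕ}, m < n → (p m).Dom :=
  Nat.rfind_dom

theorem rfind_const_true : (Nat.rfind (fun _ => Part.some true : ℕ →. Bool)).Dom :=
  Nat.rfind_dom.2 ⟨0, Part.mem_some _, fun h => absurd h (Nat.not_lt_zero _)⟩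

theorem rfind_const_false : ¬(Nat.rfind (fun _ => Part.some false : ℕ →. Bool)).Dom := fun h => by
  obtain ⟨n, hn, -⟩ := Nat.rfind_dom.1 h
  exact absurd (Part.mem_some_iff.1 hn) (by decide)

namespace OCode

/-- Encoding of oracle codes, inverse to `ofNatOCode`. -/
def enc : OCode → ℕ
  | .zero => 0
  | .succ => 1
  | .left => 2
  | .right => 3
  | .oracle => 4
  | .pair cf cg => 2 * (2 * Nat.pair cf.enc cg.enc) + 5
  | .comp cf cg => 2 * (2 * Nat.pair cf.enc cg.enc + 1) + 5
  | .prec cf cg => (2 * (2 * Nat.pair cf.enc cg.enc) + 1) + 5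
  | .rfind' cf => (2 * (2 * cf.enc + 1) + 1) + 5

theorem ofNat_enc : ∀ c : OCode, ofNatOCode c.enc = c := fun c => by
  induction c <;> simp [enc, ofNatOCode, Nat.div2_val, *]

end OCode

/-- Every function recursive in `O` has a code. -/
theorem RelRecursiveIn.exists_code {O f : ℕ →. ℕ} (h : RelRecursiveIn O f) :
    ∃ c : OCode, c.eval O = f := by
  induction h with
  | oracle => exact ⟨.oracle, rfl⟩
  | zero => exact ⟨.zero, rfl⟩
  | succ => exact ⟨.succ, rfl⟩
  | left => exact ⟨.left, rfl⟩
  | right => exact ⟨.right, rfl⟩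
  | pair _ _ hf hg =>
    rcases hf with ⟨cf, rfl⟩; rcases hg with ⟨cg, rfl⟩
    exact ⟨.pair cf cg, rfl⟩
  | comp _ _ hf hg =>
    rcases hf with ⟨cf, rfl⟩; rcases hg with ⟨cg, rfl⟩
    exact ⟨.comp cf cg, rfl⟩
  | prec _ _ hf hg =>
    rcases hf with ⟨cf, rfl⟩; rcases hg with ⟨cg, rfl⟩
    exact ⟨.prec cf cg, rfl⟩
  | rfind _ hf =>
    rcases hf with ⟨cf, rfl⟩
    refine ⟨.comp (.rfind' cf) (.pair (.pair .left .right) .zero), ?_⟩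
    simp [OCode.eval, Seq.seq, pure, PFun.pure, Part.map_id']
    rfl

/-- Anything partial recursive is recursive in any oracle. -/
theorem Nat.Partrec.relRecursiveIn {f : ℕ →. ℕ} (h : Nat.Partrec f) (O : ℕ →. ℕ) :
    RelRecursiveIn O f := by
  induction h with
  | zero => exact .zero
  | succ => exact .succ
  | left => exact .left
  | right => exact .right
  | pair _ _ ihf ihg => exact .pair ihf ihg
  | comp _ _ ihf ihg => exact .comp ihf ihg
  | prec _ _ ihf ihg => exact .prec ihf ihg
  | rfind _ ihf => exact .rfind ihf

theorem Primrec.relRecursiveIn {f : ℕ → ℕ} (h : Primrec f) (O : ℕ →. ℕ) :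
    RelRecursiveIn O ↑f :=
  (Nat.Partrec.of_primrec (Primrec.nat_iff.1 h)).relRecursiveIn O

/-- Code for the constant function `n`. -/
def constC : ℕ → OCode
  | 0 => .zero
  | n + 1 => .comp .succ (constC n)

theorem eval_constC (O : ℕ →. ℕ) : ∀ n m : ℕ, (constC n).eval O m = Part.some n
  | 0, _ => rfl
  | n + 1, m => by
    simp [constC, OCode.eval, pfun_some_bind, rfind_dom_pfun, rfind_const_true, rfind_const_false, eval_constC O n m]

/-- The code whose halting (on any input) is equivalent to `x n = false`. -/
def dnC (n : ℕ) : OCode := .rfind' (.comp .oracle (constC n))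

theorem dnC_dom (x : TReal) (n a : ℕ) :
    ((dnC n).eval (charFn x) a).Dom ↔ x n = false := by
  cases hx : x n <;>
    simp [dnC, OCode.eval, eval_constC, charFn, pfun_some_bind, rfind_dom_pfun, rfind_const_true, rfind_const_false, hx, Nat.rfind_dom]

theorem ecfun_eq : ∀ n : ℕ,
    (Nat.rec 0 (fun _ ih => 2 * (2 * Nat.pair 1 ih + 1) + 5) n : ℕ) = (constC n).enc
  | 0 => rfl
  | n + 1 => by simp [constC, OCode.enc, ecfun_eq n]

/-- `gfun n` is the numeral code of `dnC n`. -/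
def gfun (n : ℕ) : ℕ :=
  2 * (2 * (2 * (2 * Nat.pair 4
    (Nat.rec 0 (fun _ ih => 2 * (2 * Nat.pair 1 ih + 1) + 5) n) + 1) + 5) + 1) + 1 + 5

theorem gfun_eq (n : ℕ) : gfun n = (dnC n).enc := by
  simp [gfun, dnC, OCode.enc, ecfun_eq]

theorem gfun_primrec : Primrec gfun := by
  have hF : Primrec₂ (fun (_ : ℕ) (ih : ℕ) => 2 * (2 * Nat.pair 1 ih + 1) + 5) :=
    (Primrec.nat_add.comp
      (Primrec.nat_double.comp (Primrec.nat_double_succ.comp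
        (Primrec₂.natPair.comp (Primrec.const 1) Primrec.snd)))
      (Primrec.const 5)).to₂
  have h1 : Primrec fun n : ℕ =>
      (Nat.rec 0 (fun _ ih => 2 * (2 * Nat.pair 1 ih + 1) + 5) n : ℕ) :=
    Primrec.nat_rec₁ 0 hF
  have h2 : Primrec fun n : ℕ => Nat.pair 4
      (Nat.rec 0 (fun _ ih => 2 * (2 * Nat.pair 1 ih + 1) + 5) n : ℕ) :=
    Primrec₂.natPair.comp (Primrec.const 4) h1
  have hY : Primrec fun n : ℕ => 2 * (2 * Nat.pair 4
      (Nat.rec 0 (fun _ ih => 2 * (2 * Nat.pair 1 ih + 1) + 5) n : ℕ) + 1) + 5 :=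
    Primrec.nat_add.comp (Primrec.nat_double.comp (Primrec.nat_double_succ.comp h2))
      (Primrec.const 5)
  have := Primrec.nat_add.comp
      (Primrec.nat_double_succ.comp (Primrec.nat_double_succ.comp hY)) (Primrec.const 5)
  exact this.of_eq fun n => by simp [gfun]

theorem jumpReal_eq_true (x : TReal) (e : ℕ) :
    jumpReal x e = true ↔ ((ofNatOCode e).eval (charFn x) e).Dom := by
  simp [jumpReal]

theorem jumpReal_gfun (x : TReal) (n : ℕ) : jumpReal x (gfun n) = !x n := by
  have h : jumpReal x (gfun n) = true ↔ x n = false := by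
    rw [jumpReal_eq_true, gfun_eq, OCode.ofNat_enc, dnC_dom]
  cases hx : x n <;> simp [hx] at h <;> simp [h]

/-- A real is computable from its jump. -/
theorem le_jumpReal (x : TReal) : TuringLE x (jumpReal x) := by
  have hg : RelRecursiveIn (charFn (jumpReal x)) ↑gfun := gfun_primrec.relRecursiveIn _
  have hsub : RelRecursiveIn (charFn (jumpReal x)) ↑(fun v : ℕ => 1 - v) :=
    (Primrec.nat_sub.comp (Primrec.const 1) Primrec.id).relRecursiveIn _
  have h := RelRecursiveIn.comp hsub (RelRecursiveIn.comp RelRecursiveIn.oracle hg)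
  rw [TuringLE]
  refine (congrArg (RelRecursiveIn (charFn (jumpReal x))) ?_).mp h
  funext n
  simp [charFn, jumpReal_gfun, pfun_some_bind]
  cases x n <;> simp [pfun_some_bind]

/-- The jump is not computable from the real. -/
theorem jumpReal_not_le (x : TReal) : ¬TuringLE (jumpReal x) x := by
  intro hJ
  have h1 : RelRecursiveIn (charFn x)
      (fun n : ℕ => (↑(fun n : ℕ => n.unpair.1) : ℕ →. ℕ) n >>= charFn (jumpReal x)) :=
    RelRecursiveIn.comp hJ RelRecursiveIn.left
  obtain ⟨c, hc⟩ := (RelRecursiveIn.rfind h1).exists_code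
  have hdom : (c.eval (charFn x) c.enc).Dom ↔ jumpReal x c.enc = false := by
    rw [hc]
    cases hJe : jumpReal x c.enc <;>
      simp [charFn, pfun_some_bind, rfind_dom_pfun, rfind_const_true, rfind_const_false, hJe, Nat.rfind_dom]
  have hkey : jumpReal x c.enc = true ↔ (c.eval (charFn x) c.enc).Dom := by
    rw [jumpReal_eq_true, OCode.ofNat_enc]
  cases hJe : jumpReal x c.enc
  · have h3 := hkey.2 (hdom.2 hJe)
    rw [hJe] at h3
    simp at h3
  · have h3 := hdom.1 (hkey.1 hJe)
    rw [hJe] at h3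
    simp at h3

/-- The join of two reals. -/
def joinReal (x y : TReal) : TReal := fun n => if n.bodd then y n.div2 else x n.div2

theorem left_le_join (x y : TReal) : TuringLE x (joinReal x y) := by
  have hd : RelRecursiveIn (charFn (joinReal x y)) ↑(fun n : ℕ => 2 * n) :=
    Primrec.nat_double.relRecursiveIn _
  have h := RelRecursiveIn.comp RelRecursiveIn.oracle hd
  have he : charFn x = fun n =>
      (↑(fun n : ℕ => 2 * n) : ℕ →. ℕ) n >>= charFn (joinReal x y) := by
    funext n
    have h1 : (2 * n).bodd = false := by simp [Nat.bodd_mul]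
    have h2 : (2 * n).div2 = n := by simp [Nat.div2_val]
    simp [charFn, joinReal, pfun_some_bind, rfind_dom_pfun, rfind_const_true, rfind_const_false, h1, h2]
  rw [TuringLE, he]
  exact h

theorem right_le_join (x y : TReal) : TuringLE y (joinReal x y) := by
  have hd : RelRecursiveIn (charFn (joinReal x y)) ↑(fun n : ℕ => 2 * n + 1) :=
    Primrec.nat_double_succ.relRecursiveIn _
  have h := RelRecursiveIn.comp RelRecursiveIn.oracle hd
  have he : charFn y = fun n =>
      (↑(fun n : ℕ => 2 * n + 1) : ℕ →. ℕ) n >>= charFn (joinReal x y) := by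
    funext n
    have h1 : (2 * n + 1).bodd = true := by simp [Nat.bodd_mul]
    have h2 : (2 * n + 1).div2 = n := by simp [Nat.div2_val]
    simp [charFn, joinReal, pfun_some_bind, rfind_dom_pfun, rfind_const_true, rfind_const_false, h1, h2]
  rw [TuringLE, he]
  exact h

theorem deg_le_iff {a b : TReal} : deg a ≤ deg b ↔ TuringLE a b := Iff.rfl

theorem lt_jump (d : TDegree) : d < d.jump := by
  constructor
  · conv_lhs => rw [← Quotient.out_eq d]
    exact (deg_le_iff (b := jumpReal (Quotient.out d))).2 (le_jumpReal _)
  · intro hle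
    have : d.jump ≤ d := hle
    conv_rhs at this => rw [← Quotient.out_eq d]
    exact jumpReal_not_le _ ((deg_le_iff (a := jumpReal (Quotient.out d))).1 this)

/-- Under TD, if `f y = f (y')` on an upper cone and `deg (f y) ≤ y` on an
upper cone, then `deg (f y) < y` on some upper cone. -/
theorem strictly_below_on_cone (td : TD) (f : TDegree → TReal)
    (h₁ : ∃ x : TDegree, ∀ y, x ≤ y → f y = f (TDegree.jump y))
    (h₂ : ∃ x : TDegree, ∀ y, x ≤ y → deg (f y) ≤ y) :
    ∃ x : TDegree, ∀ y, x ≤ y → deg (f y) < y := by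
  obtain ⟨x₁, hx₁⟩ := h₁
  obtain ⟨x₂, hx₂⟩ := h₂
  rcases td {y | deg (f y) < y} with ⟨x, hx⟩ | ⟨x₀, hx₀⟩
  · exact ⟨x, fun y hy => hx hy⟩
  · exfalso
    set zr : TReal := joinReal (joinReal (Quotient.out x₀) (Quotient.out x₁))
      (Quotient.out x₂) with hzr
    set z : TDegree := deg zr with hz
    have hz0 : x₀ ≤ z := by
      conv_lhs => rw [← Quotient.out_eq x₀]
      exact (deg_le_iff).2 ((left_le_join _ _).trans (left_le_join _ _))
    have hz1 : x₁ ≤ z := by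
      conv_lhs => rw [← Quotient.out_eq x₁]
      exact (deg_le_iff).2 ((right_le_join _ _).trans (left_le_join _ _))
    have hz2 : x₂ ≤ z := by
      conv_lhs => rw [← Quotient.out_eq x₂]
      exact (deg_le_iff).2 (right_le_join _ _)
    have hjump := lt_jump z
    have hz0' : x₀ ≤ z.jump := hz0.trans hjump.le
    have hz2' : x₂ ≤ z.jump := hz2.trans hjump.le
    have hnotz : ¬ deg (f z) < z := hx₀ hz0
    have hnotz' : ¬ deg (f z.jump) < z.jump := hx₀ hz0'
    have heqz : deg (f z) = z := ((hx₂ z hz2).lt_or_eq).resolve_left hnotz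
    have heqz' : deg (f z.jump) = z.jump := ((hx₂ _ hz2').lt_or_eq).resolve_left hnotz'
    rw [← hx₁ z hz1, heqz] at heqz'
    exact hjump.ne heqz'
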